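/- Suppose φ̄ : (Fin n → ℝ) → ℝ is differentiable and satisfies the steady-state HJB equation with state cost m, i.e. for all x: ∇φ̄(x) ⬝ᵥ f(x) − (1/4)·((g x)ᵀ.mulVec (∇φ̄ x)) ⬝ᵥ (R⁻¹.mulVec ((g x)ᵀ.mulVec (∇φ̄ x))) + m(x) = 0. Let x : ℝ → (Fin n → ℝ) be differentiable and solve the optimal closed loop x'(t) = f(x(t)) − (1/2)·(g (x t)).mulVec (R⁻¹.mulVec ((g (x t))ᵀ.mulVec (∇φ̄ (x t)))) for all t, and define the feedback u*(y) := −(1/2)·R⁻¹.mulVec ((g y)ᵀ.mulVec (∇φ̄ y)). Then for every t, the composite t ↦ φ̄(x(t)) has derivative at t equal to −( m(x(t)) + ‖u*(x(t))‖²_R ). In particular, if m(y) ≥ 0 for all y, this derivative is ≤ 0 for all t. -/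

import Mathlib

open Matrix

/-- Euclidean gradient of a scalar function on `Fin n → ℝ`:
the vector of partial derivatives. -/
noncomputable def grad {n : ℕ} (φ : (Fin n → ℝ) → ℝ) (x : Fin n → ℝ) : Fin n → ℝ :=
  fun i => fderiv ℝ φ x (Pi.single i 1)

/-- `R`-weighted squared norm `‖u‖²_R = u ⬝ᵥ R.mulVec u`. -/
def sqR {p : ℕ} (R : Matrix (Fin p) (Fin p) ℝ) (u : Fin p → ℝ) : ℝ :=
  u ⬝ᵥ R.mulVec u

lemma fderiv_eq_grad_dot {n : ℕ} (φ : (Fin n → ℝ) → ℝ) (y v : Fin n → ℝ) :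
    fderiv ℝ φ y v = grad φ y ⬝ᵥ v := by
  have hv : v = ∑ i, v i • (Pi.single i (1:ℝ) : Fin n → ℝ) := by
    ext j
    simp [Pi.single_apply, Finset.sum_apply, mul_comm]
  conv_lhs => rw [hv]
  rw [map_sum]
  simp only [_root_.map_smul]
  simp [grad, dotProduct, mul_comm, smul_eq_mul]

theorem stmt_8 {n p : ℕ}
    (f : (Fin n → ℝ) → (Fin n → ℝ))
    (g : (Fin n → ℝ) → Matrix (Fin n) (Fin p) ℝ)
    (R : Matrix (Fin p) (Fin p) ℝ)
    (hRsymm : R.IsSymm) (hRpd : R.PosDef)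
    (m : (Fin n → ℝ) → ℝ)
    (φb : (Fin n → ℝ) → ℝ)
    (hφ : Differentiable ℝ φb)
    (hHJB : ∀ x, grad φb x ⬝ᵥ f x
        - (1/4) * ((g x)ᵀ.mulVec (grad φb x) ⬝ᵥ R⁻¹.mulVec ((g x)ᵀ.mulVec (grad φb x)))
        + m x = 0)
    (x : ℝ → (Fin n → ℝ))
    (hx : ∀ t, HasDerivAt x
      (f (x t) - (1/2 : ℝ) • (g (x t)).mulVec (R⁻¹.mulVec ((g (x t))ᵀ.mulVec (grad φb (x t))))) t)
    (ustar : (Fin n → ℝ) → (Fin p → ℝ))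
    (hustar : ∀ y, ustar y = -(1/2 : ℝ) • R⁻¹.mulVec ((g y)ᵀ.mulVec (grad φb y))) :
    ∀ t, HasDerivAt (fun s => φb (x s)) (-(m (x t) + sqR R (ustar (x t)))) t
      ∧ ((∀ y, 0 ≤ m y) → -(m (x t) + sqR R (ustar (x t))) ≤ 0) := by
  intro t
  set y := x t
  set G := grad φb y with hG
  set a := (g y)ᵀ.mulVec G with ha
  set w := R⁻¹.mulVec a with hw
  have hRdet : IsUnit R.det := isUnit_iff_ne_zero.2 hRpd.det_pos.ne'
  have hRw : R.mulVec w = a := by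
    rw [hw, Matrix.mulVec_mulVec, Matrix.mul_nonsing_inv R hRdet, Matrix.one_mulVec]
  -- the derivative via chain rule
  have hd : HasDerivAt (fun s => φb (x s))
      (fderiv ℝ φb y (f y - (1/2 : ℝ) • (g y).mulVec w)) t :=
    (hφ y).hasFDerivAt.comp_hasDerivAt t (hx t)
  have hval : fderiv ℝ φb y (f y - (1/2 : ℝ) • (g y).mulVec w)
      = -(m y + sqR R (ustar y)) := by
    rw [fderiv_eq_grad_dot]
    have h1 : G ⬝ᵥ (f y - (1/2 : ℝ) • (g y).mulVec w)
        = G ⬝ᵥ f y - (1/2) * (a ⬝ᵥ w) := by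
      have h0 : G ⬝ᵥ (g y).mulVec w = a ⬝ᵥ w := by
        rw [Matrix.dotProduct_mulVec, ha, ← Matrix.vecMul_transpose, Matrix.transpose_transpose]
      rw [dotProduct_sub, dotProduct_smul, h0, smul_eq_mul]
      try ring
    have h2 : sqR R (ustar y) = (1/4) * (a ⬝ᵥ w) := by
      have hu : ustar y = (-(1/2):ℝ) • w := by rw [hustar]
      rw [sqR, hu, Matrix.mulVec_smul, hRw, smul_dotProduct, dotProduct_smul,
        smul_eq_mul, smul_eq_mul, dotProduct_comm w a]
      ring
    have h3 := hHJB y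
    rw [h1, h2]
    nlinarith [h3]
  constructor
  · rw [← hval]; exact hd
  · intro hm
    have h0 : 0 ≤ sqR R (ustar y) := by
      rcases eq_or_ne (ustar y) 0 with h | h
      · simp [sqR, h]
      · exact le_of_lt (hRpd.dotProduct_mulVec_pos h)
    have := hm y
    linarith
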